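/- Let X and Y be Banach spaces over ℝ such that every bounded linear operator from X to Y is weakly compact, and suppose X has the Dunford–Pettis property. Then every bounded linear operator T : X → Y is strictly singular. -/

import Mathlib

open Filter Topology
open NNReal BoundedContinuousFunction

section Defs

variable {E : Type*} [NormedAddCommGroup E] [NormedSpace ℝ E]
variable {F : Type*} [NormedAddCommGroup F] [NormedSpace ℝ F]

/-- A sequence converges weakly to `x₀`. -/
def WeakConvTo (x : ℕ → E) (x₀ : E) : Prop :=
  ∀ f : E →L[ℝ] ℝ, Tendsto (fun n => f (x n)) atTop (𝓝 (f x₀))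

/-- A sequence is weakly Cauchy. -/
def WeaklyCauchySeq (x : ℕ → E) : Prop :=
  ∀ f : E →L[ℝ] ℝ, ∃ L : ℝ, Tendsto (fun n => f (x n)) atTop (𝓝 L)

/-- Every bounded sequence has a weakly Cauchy subsequence. -/
def AlmostReflexive (E : Type*) [NormedAddCommGroup E] [NormedSpace ℝ E] : Prop :=
  ∀ x : ℕ → E, (∃ C : ℝ, ∀ n, ‖x n‖ ≤ C) →
    ∃ φ : ℕ → ℕ, StrictMono φ ∧ WeaklyCauchySeq (x ∘ φ)

/-- Every weakly convergent sequence converges in norm. -/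
def SchurProperty (E : Type*) [NormedAddCommGroup E] [NormedSpace ℝ E] : Prop :=
  ∀ (x : ℕ → E) (x₀ : E), WeakConvTo x x₀ → Tendsto x atTop (𝓝 x₀)

/-- Sequential reflexivity: every bounded sequence has a weakly convergent subsequence. -/
def SeqReflexive (E : Type*) [NormedAddCommGroup E] [NormedSpace ℝ E] : Prop :=
  ∀ x : ℕ → E, (∃ C : ℝ, ∀ n, ‖x n‖ ≤ C) →
    ∃ φ : ℕ → ℕ, StrictMono φ ∧ ∃ x₀ : E, WeakConvTo (x ∘ φ) x₀

/-- Every weakly Cauchy sequence converges weakly. -/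
def WeaklySeqComplete (E : Type*) [NormedAddCommGroup E] [NormedSpace ℝ E] : Prop :=
  ∀ x : ℕ → E, WeaklyCauchySeq x → ∃ x₀ : E, WeakConvTo x x₀

/-- No infinite-dimensional closed subspace is (sequentially) reflexive. -/
def VeryIrreflexive (E : Type*) [NormedAddCommGroup E] [NormedSpace ℝ E] : Prop :=
  ∀ X₀ : Subspace ℝ E, IsClosed (X₀ : Set E) → ¬FiniteDimensional ℝ X₀ →
    ¬SeqReflexive X₀

/-- A strictly singular bounded operator: on no infinite-dimensional closed subspace is it
an isomorphism onto its image. -/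
def StrictlySingular (T : E →L[ℝ] F) : Prop :=
  ∀ X₀ : Subspace ℝ E, IsClosed (X₀ : Set E) → ¬FiniteDimensional ℝ X₀ →
    ¬∃ c : ℝ, 0 < c ∧ ∀ x ∈ X₀, c * ‖x‖ ≤ ‖T x‖

/-- A weakly compact operator. -/
def WeaklyCompactOp (T : E →L[ℝ] F) : Prop :=
  ∀ x : ℕ → E, (∃ C : ℝ, ∀ n, ‖x n‖ ≤ C) →
    ∃ φ : ℕ → ℕ, StrictMono φ ∧ ∃ y : F, WeakConvTo (fun n => T (x (φ n))) y

/-- A completely continuous operator maps weakly convergent sequences to norm convergent ones. -/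
def CompletelyContinuousOp (T : E →L[ℝ] F) : Prop :=
  ∀ (x : ℕ → E) (x₀ : E), WeakConvTo x x₀ → ∃ y : F, Tendsto (fun n => T (x n)) atTop (𝓝 y)

/-- The image of the closed unit ball is relatively compact in norm. -/
def CompactOp (T : E →L[ℝ] F) : Prop :=
  IsCompact (closure (⇑T '' Metric.closedBall (0 : E) 1))

/-- The Dunford–Pettis property. -/
def DunfordPettisProp (E : Type*) [NormedAddCommGroup E] [NormedSpace ℝ E] : Prop :=
  ∀ (Z : Type*) [NormedAddCommGroup Z] [NormedSpace ℝ Z] [CompleteSpace Z],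
    ∀ T : E →L[ℝ] Z, WeaklyCompactOp T → CompletelyContinuousOp T

/-- The reciprocal Dunford–Pettis property. -/
def ReciprocalDunfordPettisProp (E : Type*) [NormedAddCommGroup E] [NormedSpace ℝ E] : Prop :=
  ∀ (Z : Type*) [NormedAddCommGroup Z] [NormedSpace ℝ Z] [CompleteSpace Z],
    ∀ T : E →L[ℝ] Z, CompletelyContinuousOp T → WeaklyCompactOp T

/-- The Dieudonné property. -/
def DieudonneProp (E : Type*) [NormedAddCommGroup E] [NormedSpace ℝ E] : Prop :=
  ∀ (Z : Type*) [NormedAddCommGroup Z] [NormedSpace ℝ Z] [CompleteSpace Z],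
    ∀ T : E →L[ℝ] Z,
      (∀ x : ℕ → E, WeaklyCauchySeq x → ∃ y : Z, WeakConvTo (fun n => T (x n)) y) →
      WeaklyCompactOp T

/-- A Grothendieck space: weak*-convergent sequences in the dual converge weakly. -/
def GrothendieckSpace (E : Type*) [NormedAddCommGroup E] [NormedSpace ℝ E] : Prop :=
  ∀ (f : ℕ → (E →L[ℝ] ℝ)) (g : E →L[ℝ] ℝ),
    (∀ x : E, Tendsto (fun n => f n x) atTop (𝓝 (g x))) →
    ∀ F : (E →L[ℝ] ℝ) →L[ℝ] ℝ, Tendsto (fun n => F (f n)) atTop (𝓝 (F g))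

/-- The Banach space ℓ¹ of absolutely summable real sequences. -/
abbrev EllOne : Type := lp (fun _ : ℕ => ℝ) 1

/-- Quasi-reflexive: the canonical image of `E` in its bidual has finite codimension. -/
def QuasiReflexive (E : Type*) [NormedAddCommGroup E] [NormedSpace ℝ E] : Prop :=
  FiniteDimensional ℝ
    ((StrongDual ℝ (StrongDual ℝ E)) ⧸
      LinearMap.range (NormedSpace.inclusionInDoubleDual ℝ E : E →ₗ[ℝ] StrongDual ℝ (StrongDual ℝ E)))

/-- Hereditarily-ℓ¹: every infinite-dimensional closed subspace contains a closed subspace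
topologically isomorphic to ℓ¹. -/
def HereditarilyEllOne (E : Type*) [NormedAddCommGroup E] [NormedSpace ℝ E] : Prop :=
  ∀ X₀ : Subspace ℝ E, IsClosed (X₀ : Set E) → ¬FiniteDimensional ℝ X₀ →
    ∃ Z : Subspace ℝ E, Z ≤ X₀ ∧ IsClosed (Z : Set E) ∧ Nonempty (Z ≃L[ℝ] EllOne)

end Defs

variable {X : Type*} [NormedAddCommGroup X] [NormedSpace ℝ X] [CompleteSpace X]
variable {Y : Type*} [NormedAddCommGroup Y] [NormedSpace ℝ Y] [CompleteSpace Y]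

private lemma norming_embedding (v : ℕ → Y) :
    ∃ R : Y →L[ℝ] (ℕ →ᵇ ℝ),
      ∀ w ∈ closure ((Submodule.span ℝ (Set.range v) : Submodule ℝ Y) : Set Y), ‖w‖ ≤ ‖R w‖ := by
  have hsep : TopologicalSpace.IsSeparable
      (closure ((Submodule.span ℝ (Set.range v) : Submodule ℝ Y) : Set Y)) :=
    ((Set.countable_range v).isSeparable.span).closure
  obtain ⟨cset, hccount, hcsub⟩ := hsep
  obtain ⟨d, hd⟩ := (hccount.insert 0).exists_eq_range (Set.insert_nonempty 0 cset)
  choose g hg1 hg2 using fun k => exists_dual_vector'' ℝ (d k)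
  have hbd : ∀ (y : Y) (k : ℕ), ‖g k y‖ ≤ ‖y‖ := by
    intro y k
    calc ‖g k y‖ ≤ ‖g k‖ * ‖y‖ := (g k).le_opNorm y
      _ ≤ 1 * ‖y‖ := by gcongr; exact hg1 k
      _ = ‖y‖ := one_mul _
  set Rlin : Y →ₗ[ℝ] (ℕ →ᵇ ℝ) :=
    { toFun := fun y => BoundedContinuousFunction.ofNormedAddCommGroupDiscrete
        (fun k => g k y) ‖y‖ (hbd y)
      map_add' := by
        intro y z
        ext k
        simp [BoundedContinuousFunction.coe_ofNormedAddCommGroupDiscrete]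
      map_smul' := by
        intro a y
        ext k
        simp [BoundedContinuousFunction.coe_ofNormedAddCommGroupDiscrete] } with hRlin
  have hRnorm : ∀ y, ‖Rlin y‖ ≤ 1 * ‖y‖ := by
    intro y
    rw [one_mul]
    exact (BoundedContinuousFunction.norm_le (norm_nonneg y)).mpr (hbd y)
  refine ⟨Rlin.mkContinuous 1 hRnorm, ?_⟩
  intro w hw
  have hw' : w ∈ closure (Set.range d) := by
    rw [← hd]
    exact closure_mono (Set.subset_insert 0 cset) (hcsub hw)
  refine le_of_forall_pos_le_add ?_
  intro ε hε
  obtain ⟨b, hb, hdist⟩ := Metric.mem_closure_iff.mp hw' (ε/2) (by linarith)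
  obtain ⟨k, rfl⟩ := hb
  have h1 : ‖d k‖ - ε/2 ≤ ‖g k w‖ := by
    have h2 : g k (d k) - g k w = g k (d k - w) := by rw [map_sub]
    have h3 : ‖g k (d k) - g k w‖ ≤ ‖d k - w‖ := h2 ▸ hbd _ _
    have h4 : ‖d k - w‖ < ε/2 := by rwa [dist_comm, dist_eq_norm] at hdist
    have h5 := (norm_sub_norm_le (g k (d k)) (g k w)).trans h3
    rw [hg2 k] at h5
    simp only [RCLike.norm_ofReal, abs_norm] at h5
    linarith
  have h6 : ‖w‖ - ε/2 ≤ ‖d k‖ := by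
    have := norm_sub_norm_le w (d k)
    have h4 : ‖w - d k‖ < ε/2 := by rwa [dist_eq_norm] at hdist
    linarith [le_abs_self (‖w‖ - ‖d k‖)]
  have h7 : ‖g k w‖ ≤ ‖Rlin.mkContinuous 1 hRnorm w‖ := by
    have : (Rlin.mkContinuous 1 hRnorm w) k = g k w := rfl
    rw [← this]
    exact BoundedContinuousFunction.norm_coe_le_norm _ k
  linarith

private lemma stmt11_aux (T : X →L[ℝ] Y) (hwc : WeaklyCompactOp T)
    (hcc : ∀ R : Y →L[ℝ] (ℕ →ᵇ ℝ), CompletelyContinuousOp (R.comp T))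
    (X₀ : Subspace ℝ X) (hclosed : IsClosed (X₀ : Set X))
    (c : ℝ) (hc : 0 < c) (hbound : ∀ x ∈ X₀, c * ‖x‖ ≤ ‖T x‖) : FiniteDimensional ℝ X₀ := by
  haveI : CompleteSpace X₀ := hclosed.completeSpace_coe
  set S : X₀ →L[ℝ] Y := T.comp X₀.subtypeL with hSdef
  have hSb : ∀ u : X₀, c * ‖u‖ ≤ ‖S u‖ := fun u => hbound u u.2
  have hK : ∀ u : X₀, ‖u‖ ≤ (c.toNNReal⁻¹ : ℝ≥0) * ‖S u‖ := by
    intro u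
    have h1 : ((c.toNNReal⁻¹ : ℝ≥0) : ℝ) = c⁻¹ := by
      rw [NNReal.coe_inv, Real.coe_toNNReal _ hc.le]
    rw [h1, ← div_eq_inv_mul]
    exact (le_div_iff₀' hc).mpr (hSb u)
  have antilip : AntilipschitzWith c.toNNReal⁻¹ S := S.antilipschitz_of_bound hK
  have hinj : Function.Injective S := antilip.injective
  have hrange_closed : IsClosed (Set.range S) := antilip.isClosed_range S.uniformContinuous
  have hinjₗ : Function.Injective (S : X₀ →ₗ[ℝ] Y) := hinj
  set Sₗ : X₀ →ₗ[ℝ] Y := (S : X₀ →ₗ[ℝ] Y) with hSl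
  apply FiniteDimensional.of_isCompact_closedBall₀ (𝕜 := ℝ) one_pos
  apply IsSeqCompact.isCompact
  intro x hx
  have hxb : ∃ C : ℝ, ∀ n, ‖((x n : X₀) : X)‖ ≤ C := by
    refine ⟨1, fun n => ?_⟩
    have := hx n
    simpa [Metric.mem_closedBall, dist_zero_right] using this
  obtain ⟨φ, hφ, y, hy⟩ := hwc (fun n => ((x n : X₀) : X)) hxb
  -- the weak limit lies in the range of S
  have hyrange : y ∈ Set.range S := by
    by_contra hy'
    obtain ⟨g, u, hgu, hug⟩ := geometric_hahn_banach_closed_point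
      (s := Set.range (⇑S)) ((LinearMap.range Sₗ).convex)
      hrange_closed hy'
    have hzero : ∀ z ∈ Set.range ⇑S, g z = 0 := by
      intro z hz
      by_contra hgz
      have hmem : ((u + 1) / g z) • z ∈ Set.range ⇑S :=
        Submodule.smul_mem (LinearMap.range Sₗ) _ hz
      have := hgu _ hmem
      rw [map_smul, smul_eq_mul, div_mul_cancel₀ _ hgz] at this
      linarith
    have h0 : ∀ n, g (T ((x (φ n) : X₀) : X)) = 0 := fun n => hzero _ ⟨x (φ n), rfl⟩
    have hgy : g y = 0 := by
      have h1 : Tendsto (fun n => g (T ((x (φ n) : X₀) : X))) atTop (𝓝 (g y)) := hy g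
      have h2 : Tendsto (fun n => g (T ((x (φ n) : X₀) : X))) atTop (𝓝 0) := by
        simpa [h0] using tendsto_const_nhds (α := ℝ) (f := atTop (α := ℕ)) (a := 0)
      exact tendsto_nhds_unique h1 h2
    have hu0 : (0 : ℝ) < u := by
      have := hgu 0 ⟨0, map_zero S⟩
      simpa using this
    rw [hgy] at hug; linarith
  obtain ⟨x₀, hx₀⟩ := hyrange
  -- weak convergence of the subsequence to x₀ in X
  have hweak : WeakConvTo (fun n => ((x (φ n) : X₀) : X)) (x₀ : X) := by
    intro f
    set e : X₀ ≃ₗ[ℝ] LinearMap.range Sₗ := LinearEquiv.ofInjective Sₗ hinjₗ with he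
    set ψlin : LinearMap.range Sₗ →ₗ[ℝ] ℝ :=
      (f.comp X₀.subtypeL).toLinearMap.comp e.symm.toLinearMap with hψ
    have hbnd : ∀ z : LinearMap.range Sₗ, ‖ψlin z‖ ≤ (‖f‖ * c⁻¹) * ‖z‖ := by
      intro z
      set u : X₀ := e.symm z with hu
      have hz : (z : Y) = S u := by
        have : e u = z := by rw [hu, e.apply_symm_apply]
        rw [← this, he]
        rfl
      have h1 : ‖ψlin z‖ ≤ ‖f‖ * ‖u‖ := by
        have : ψlin z = f ((u : X₀) : X) := rfl
        rw [this]
        exact (f.le_opNorm _)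
      have h2 : ‖u‖ ≤ c⁻¹ * ‖S u‖ := by
        rw [← div_eq_inv_mul]; exact (le_div_iff₀' hc).mpr (hSb u)
      have h3 : ‖z‖ = ‖S u‖ := by rw [← hz]; rfl
      calc ‖ψlin z‖ ≤ ‖f‖ * ‖u‖ := h1
        _ ≤ ‖f‖ * (c⁻¹ * ‖S u‖) := by
            exact mul_le_mul_of_nonneg_left h2 (norm_nonneg f)
        _ = (‖f‖ * c⁻¹) * ‖z‖ := by rw [h3]; ring
    set ψ : ↥(LinearMap.range Sₗ) →L[ℝ] ℝ := LinearMap.mkContinuous ψlin (‖f‖ * c⁻¹) hbnd with hψc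
    obtain ⟨g, hg, -⟩ := exists_extension_norm_eq (LinearMap.range Sₗ) ψ
    have key : ∀ u : X₀, g (S u) = f ((u : X₀) : X) := by
      intro u
      have hmem : S u ∈ LinearMap.range Sₗ := LinearMap.mem_range_self Sₗ u
      have h4 : g (S u) = ψ ⟨S u, hmem⟩ := hg ⟨S u, hmem⟩
      have h5 : (⟨S u, hmem⟩ : LinearMap.range Sₗ) = e u := rfl
      rw [h4, h5]
      show ψlin (e u) = f ((u : X₀) : X)
      rw [hψ]
      simp [LinearEquiv.symm_apply_apply]
    have h6 : Tendsto (fun n => g (T ((x (φ n) : X₀) : X))) atTop (𝓝 (g y)) := hy g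
    have h7 : ∀ n, g (T ((x (φ n) : X₀) : X)) = f ((x (φ n) : X₀) : X) := fun n => key (x (φ n))
    have h8 : g y = f ((x₀ : X₀) : X) := by rw [← hx₀]; exact key x₀
    rw [h8] at h6
    refine h6.congr fun n => h7 n
  -- norming embedding of the separable closed span into ℓ∞
  obtain ⟨R, hR⟩ := norming_embedding (fun n => T ((x (φ n) : X₀) : X))
  obtain ⟨y', hy'⟩ := hcc R (fun n => ((x (φ n) : X₀) : X)) ((x₀ : X₀) : X) hweak
  have hRc : CauchySeq (fun n => R (T ((x (φ n) : X₀) : X))) := hy'.cauchySeq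
  have hSc : CauchySeq (fun n => S (x (φ n))) := by
    rw [Metric.cauchySeq_iff] at hRc ⊢
    intro ε hε
    obtain ⟨N, hN⟩ := hRc ε hε
    refine ⟨N, fun m hm n hn => ?_⟩
    have hmem : S (x (φ m)) - S (x (φ n)) ∈ closure ((Submodule.span ℝ
        (Set.range (fun n => T ((x (φ n) : X₀) : X))) : Submodule ℝ Y) : Set Y) := by
      apply subset_closure
      exact Submodule.sub_mem _ (Submodule.subset_span ⟨m, rfl⟩) (Submodule.subset_span ⟨n, rfl⟩)
    calc dist (S (x (φ m))) (S (x (φ n))) = ‖S (x (φ m)) - S (x (φ n))‖ := dist_eq_norm _ _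
      _ ≤ ‖R (S (x (φ m)) - S (x (φ n)))‖ := hR _ hmem
      _ = dist (R (T ((x (φ m) : X₀) : X))) (R (T ((x (φ n) : X₀) : X))) := by
          rw [map_sub, ← dist_eq_norm]
          rfl
      _ < ε := hN m hm n hn
  have hcs : CauchySeq (fun n => x (φ n)) := by
    have hui := antilip.isUniformInducing S.uniformContinuous
    have h9 : Cauchy (Filter.map (⇑S) (Filter.map (fun n => x (φ n)) atTop)) := by
      rw [Filter.map_map]
      exact hSc
    exact hui.cauchy_map_iff.mp h9
  obtain ⟨l, hl⟩ := cauchySeq_tendsto_of_complete hcs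
  refine ⟨l, ?_, φ, hφ, hl⟩
  exact Metric.isClosed_closedBall.mem_of_tendsto hl (Eventually.of_forall fun n => hx (φ n))

/-- If every bounded linear operator from `X` to `Y` is weakly compact and `X` has the
Dunford–Pettis property, then every bounded linear operator `T : X → Y` is strictly singular. -/
theorem stmt11 (h : ∀ T : X →L[ℝ] Y, WeaklyCompactOp T) (hX : DunfordPettisProp X)
    (T : X →L[ℝ] Y) : StrictlySingular T := by
  intro X₀ hclosed hfin hex
  obtain ⟨c, hc, hbound⟩ := hex
  have hcc : ∀ R : Y →L[ℝ] (ℕ →ᵇ ℝ), CompletelyContinuousOp (R.comp T) := by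
    intro R
    set e : ULift (ℕ →ᵇ ℝ) ≃L[ℝ] (ℕ →ᵇ ℝ) := ContinuousLinearEquiv.ulift with he
    set T' : X →L[ℝ] ULift (ℕ →ᵇ ℝ) :=
      (e.symm : (ℕ →ᵇ ℝ) →L[ℝ] ULift (ℕ →ᵇ ℝ)).comp (R.comp T) with hT'
    have hwc' : WeaklyCompactOp T' := by
      intro z hz
      obtain ⟨φ, hφ, y, hy⟩ := h T z hz
      exact ⟨φ, hφ, e.symm (R y), fun f =>
        hy (f.comp ((e.symm : (ℕ →ᵇ ℝ) →L[ℝ] ULift (ℕ →ᵇ ℝ)).comp R))⟩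
    have hccT' := hX _ T' hwc'
    intro x x₀ hx
    obtain ⟨yhat, hyhat⟩ := hccT' x x₀ hx
    exact ⟨e yhat, (e.continuous.tendsto yhat).comp hyhat⟩
  exact hfin (stmt11_aux T (h T) hcc X₀ hclosed c hc hbound)
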